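/- Let w be a word over a finite alphabet Σ, let k ∈ [|w|], and let u ∈ ScatFact_k(w). Then there exists a sequence of indices 1 ≤ j_1 < j_2 < ⋯ < j_k ≤ |w| such that: (1) w[j_1]⋯w[j_k] = u; (2) the letter w[j_1] does not occur in the prefix w[1..j_1 − 1]; (3) nextAlphPos_w(j_i, |alph(w[j_i + 1..j_{i+1}])|) = j_{i+1} for all i ∈ [k − 1]. Moreover, for any other sequence of indices 1 ≤ j'_1 < j'_2 < ⋯ < j'_k ≤ |w| with w[j'_1]⋯w[j'_k] = u, we have j_i ≤ j'_i for every i ∈ [k]. -/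

import Mathlib

open List

universe u
variable {α : Type u}

/-- `ScatFact k w` is the set of scattered factors (subsequences) of `w` of length exactly `k`. -/
def ScatFact (k : ℕ) (w : List α) : Set (List α) :=
  {v | v.length = k ∧ v.Sublist w}

/-- `w` is `k`-universal over the alphabet `S`: every word of length `k` over `S`
is a scattered factor of `w`. -/
def IsKUniversal [DecidableEq α] (S : Finset α) (k : ℕ) (w : List α) : Prop :=
  ∀ v : List α, v.length = k → (∀ x ∈ v, x ∈ S) → v.Sublist w

/-- The universality index of `w` over the alphabet `S`: the largest `k` such that
`w` is `k`-universal over `S`. -/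
noncomputable def univIdx [DecidableEq α] (S : Finset α) (w : List α) : ℕ :=
  sSup {k | IsKUniversal S k w}

/-- `IsArchFact S w inners modus rest` says that `w` has the arch factorization
`w = ar_1 ⋯ ar_n · rest` over the alphabet `S`, where the `i`-th arch is
`ar_i = inners[i] ++ [modus[i]]`: each arch contains every letter of `S`,
the last letter of each arch occurs only once within the arch, and the
alphabet of the rest is a proper subset of `S`. -/
def IsArchFact [DecidableEq α] (S : Finset α) (w : List α)
    (inners : List (List α)) (modus : List α) (rest : List α) : Prop :=
  inners.length = modus.length ∧
  w = (List.zipWith (fun inn m => inn ++ [m]) inners modus).flatten ++ rest ∧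
  (∀ p ∈ List.zip inners modus, ∀ x ∈ S, x ∈ p.1 ++ [p.2]) ∧
  (∀ p ∈ List.zip inners modus, p.2 ∉ p.1) ∧
  rest.toFinset ⊂ S

/-- `v` is perfect `k`-universal over `S`: `alph(v) = S`, the universality index of `v`
over `S` is `k`, and the rest of its arch factorization over `S` is empty. -/
def IsPerfectUniv [DecidableEq α] (S : Finset α) (k : ℕ) (v : List α) : Prop :=
  v.toFinset = S ∧ univIdx S v = k ∧ ∃ inners modus, IsArchFact S v inners modus []

/-- `v` is minimal perfect `k`-universal over `S`. -/
def IsMinPerfectUniv [DecidableEq α] (S : Finset α) (k : ℕ) (v : List α) : Prop :=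
  IsPerfectUniv S k v ∧ ∀ v' : List α, IsPerfectUniv S k v' → v.length ≤ v'.length

/-- `nextAlphPos w i s` (positions `1`-indexed): the least position `j` such that
`w[i+1..j]` contains exactly `s` distinct letters, or `none` (representing `-1`)
if `w[i+1..|w|]` contains fewer than `s` distinct letters. -/
noncomputable def nextAlphPos [DecidableEq α] (w : List α) (i s : ℕ) : Option ℕ :=
  if (w.drop i).toFinset.card < s then none
  else some (sInf {j | ((w.drop i).take (j - i)).toFinset.card = s})

/-- The letter of `w` at (1-indexed) position `j`. -/
def letterAt [Inhabited α] (w : List α) (j : ℕ) : α := w.getD (j - 1) default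

/-- The word over `Fin σ` with `ι` arches, whose first arch is `a_1 a_2 ⋯ a_σ`
and each later arch is the reverse of the previous one. -/
def wmin (σ ι : ℕ) : List (Fin σ) :=
  ((List.range ι).map (fun i =>
    if i % 2 = 0 then List.finRange σ else (List.finRange σ).reverse)).flatten

/-! ### Auxiliary material for Statement 13 -/

section Aux

variable [DecidableEq α] [Inhabited α]

/-- The leftmost (greedy) embedding of `u` into `w`, as a list of 0-indexed positions. -/
def lmEmb : List α → List α → List ℕ
  | [], _ => []
  | a :: u, w =>
    w.idxOf a :: (lmEmb u (w.drop (w.idxOf a + 1))).map (· + (w.idxOf a + 1))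

lemma lmEmb_length : ∀ (u w : List α), (lmEmb u w).length = u.length
  | [], _ => rfl
  | _ :: u, w => by simp [lmEmb, lmEmb_length u]

lemma indexOf_le_of_getElem {l : List α} {a : α} {i : ℕ} (hi : i < l.length)
    (h : l[i] = a) : l.idxOf a ≤ i := by
  induction l generalizing i with
  | nil => simp at hi
  | cons b l ih =>
    cases i with
    | zero =>
      simp only [List.getElem_cons_zero] at h
      simp [h, List.idxOf_cons_self]
    | succ n =>
      by_cases hb : b = a
      · simp [List.idxOf_cons_eq _ hb]
      · rw [List.idxOf_cons_ne _ hb]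
        have := ih (by simpa using hi) (by simpa using h)
        omega

lemma not_mem_take_indexOf (l : List α) (a : α) : a ∉ l.take (l.idxOf a) := by
  intro h
  obtain ⟨i, hi, hget⟩ := List.getElem_of_mem h
  rw [List.getElem_take] at hget
  have h1 : i < l.idxOf a := by
    have := hi; simp only [List.length_take, lt_min_iff] at this; exact this.1
  have h2 : i < l.length := by
    have := hi; simp only [List.length_take, lt_min_iff] at this; exact this.2
  have := indexOf_le_of_getElem h2 hget
  omega

lemma sublist_drop_indexOf {a : α} {u : List α} : ∀ {w : List α}, (a :: u) <+ w →
    u <+ w.drop (w.idxOf a + 1) := by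
  intro w h
  induction w with
  | nil => exact absurd h (by simp)
  | cons b w ih =>
    by_cases hb : b = a
    · subst hb
      rw [List.idxOf_cons_self]
      simp only [List.drop_succ_cons, List.drop_zero]
      cases h with
      | cons _ h' => exact (List.sublist_cons_self b u).trans h'
      | cons_cons _ h' => exact h'
    · rw [List.idxOf_cons_ne _ hb]
      cases h with
      | cons _ h' =>
        have := ih h'
        simpa [List.drop_succ_cons] using this
      | cons_cons _ h' => exact absurd rfl hb

lemma getD_drop' (w : List α) (c x : ℕ) (hx : c ≤ x) :
    (w.drop c).getD (x - c) default = w.getD x default := by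
  rw [List.getD_eq_getElem?_getD, List.getD_eq_getElem?_getD, List.getElem?_drop]
  congr 2
  omega

lemma lmEmb_spec : ∀ (u w : List α), u <+ w →
    (∀ i ∈ lmEmb u w, i < w.length) ∧
    (lmEmb u w).Pairwise (· < ·) ∧
    (lmEmb u w).map (fun i => w.getD i default) = u ∧
    (lmEmb u w).IsChain (fun p q => w.getD q default ∉ (w.drop (p + 1)).take (q - (p + 1)))
  | [], w, _ => by simp [lmEmb]
  | a :: u, w, h => by
    have ha : a ∈ w := h.subset (List.mem_cons_self)
    have hia : w.idxOf a < w.length := List.idxOf_lt_length_iff.2 ha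
    set c := w.idxOf a + 1 with hc
    have hd : u <+ w.drop c := sublist_drop_indexOf h
    obtain ⟨ihb, ihp, ihm, ihc⟩ := lmEmb_spec u (w.drop c) hd
    have hlen : (w.drop c).length = w.length - c := List.length_drop
    refine ⟨?_, ?_, ?_, ?_⟩
    · intro i hi
      simp only [lmEmb, List.mem_cons, List.mem_map] at hi
      rcases hi with rfl | ⟨x, hx, rfl⟩
      · exact hia
      · have := ihb x hx
        omega
    · rw [lmEmb, List.pairwise_cons]
      constructor
      · intro y hy
        simp only [List.mem_map] at hy
        obtain ⟨x, _, rfl⟩ := hy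
        omega
      · rw [List.pairwise_map]
        exact ihp.imp_of_mem (fun _ _ hab => by omega)
    · rw [lmEmb, List.map_cons, List.map_map]
      congr 1
      · rw [List.getD_eq_getElem _ _ hia]
        exact List.getElem_idxOf hia
      · have key : ∀ x ∈ lmEmb u (w.drop c),
            ((fun i => w.getD i default) ∘ fun x => x + (w.idxOf a + 1)) x
              = (fun i => (w.drop c).getD i default) x := by
          intro x hx
          simp only [Function.comp_apply]
          rw [← getD_drop' w c (x + c) (by omega)]
          congr 1
          omega
        rw [List.map_congr_left key, ihm]
    · rw [lmEmb, List.isChain_cons]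
      constructor
      · intro y hy
        cases u with
        | nil => simp [lmEmb] at hy
        | cons a' u' =>
          simp only [lmEmb, List.map_cons, List.head?_cons, Option.mem_some_iff] at hy
          subst hy
          have ha' : a' ∈ w.drop c := hd.subset (List.mem_cons_self)
          have hia' : (w.drop c).idxOf a' < (w.drop c).length := List.idxOf_lt_length_iff.2 ha'
          have h1 : (w.drop c).idxOf a' + c - (w.idxOf a + 1) = (w.drop c).idxOf a' := by
            omega
          have h2 : w.getD ((w.drop c).idxOf a' + c) default = a' := by
            rw [← getD_drop' w c ((w.drop c).idxOf a' + c) (by omega)]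
            have : (w.drop c).idxOf a' + c - c = (w.drop c).idxOf a' := by omega
            rw [this, List.getD_eq_getElem _ _ hia']
            exact List.getElem_idxOf hia'
          rw [h2]
          simpa using not_mem_take_indexOf (w.drop (w.idxOf a + 1)) a'
      · rw [List.isChain_map]
        apply ihc.imp
        intro p q hpq
        have h1 : w.getD (q + c) default = (w.drop c).getD q default := by
          rw [← getD_drop' w c (q + c) (by omega)]
          congr 1
          omega
        have h2 : w.drop (p + c + 1) = (w.drop c).drop (p + 1) := by
          rw [List.drop_drop]
          congr 1
          omega
        have h3 : q + c - (p + c + 1) = q - (p + 1) := by omega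
        rw [h1, h2, h3]
        exact hpq

lemma forall2_add_le {c : ℕ} : ∀ {l₁ l₂ : List ℕ},
    List.Forall₂ (fun x y => x ≤ y - c) l₁ l₂ → (∀ y ∈ l₂, c ≤ y) →
    List.Forall₂ (fun x y => x + c ≤ y) l₁ l₂ := by
  intro l₁ l₂ h
  induction h with
  | nil => intro; exact .nil
  | @cons a b l₁ l₂ hab _ ih =>
    intro hc
    refine .cons ?_ (ih fun y hy => hc y (List.mem_cons_of_mem _ hy))
    have := hc b (List.mem_cons_self)
    omega

lemma lmEmb_min : ∀ (u w : List α) (g : List ℕ), g.length = u.length →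
    g.Pairwise (· < ·) → (∀ i ∈ g, i < w.length) →
    g.map (fun i => w.getD i default) = u →
    List.Forall₂ (· ≤ ·) (lmEmb u w) g
  | [], _, g, hg, _, _, _ => by
    have : g = [] := List.length_eq_zero_iff.mp hg
    subst this
    exact .nil
  | a :: u, w, g, hg, hpw, hbd, hmap => by
    match g, hg with
    | p :: g', hg =>
      have hp : p < w.length := hbd p (List.mem_cons_self)
      have hpg : ∀ x ∈ g', p < x := fun x hx => (List.pairwise_cons.1 hpw).1 x hx
      have hpw' : g'.Pairwise (· < ·) := (List.pairwise_cons.1 hpw).2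
      simp only [List.map_cons, List.cons.injEq] at hmap
      obtain ⟨hpa, hmap'⟩ := hmap
      have hpa' : w[p] = a := by rw [← List.getD_eq_getElem w default hp]; exact hpa
      have hile : w.idxOf a ≤ p := indexOf_le_of_getElem hp hpa'
      set c := w.idxOf a + 1 with hc
      have hcle : ∀ x ∈ g', c ≤ x := fun x hx => by have := hpg x hx; omega
      have ih : List.Forall₂ (· ≤ ·) (lmEmb u (w.drop c)) (g'.map (· - c)) := by
        apply lmEmb_min u (w.drop c) (g'.map (· - c))
        · have h0 : g'.length = u.length := by simpa using hg
          simpa using h0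
        · rw [List.pairwise_map]
          exact hpw'.imp_of_mem (fun hx hy hxy => by
            have := hcle _ hx; omega)
        · intro i hi
          simp only [List.mem_map] at hi
          obtain ⟨x, hx, rfl⟩ := hi
          have h1 := hbd x (List.mem_cons_of_mem _ hx)
          have h2 := hcle x hx
          rw [List.length_drop]
          omega
        · rw [List.map_map, ← hmap']
          apply List.map_congr_left
          intro x hx
          exact getD_drop' w c x (hcle x hx)
      rw [lmEmb]
      refine .cons hile ?_
      rw [List.forall₂_map_left_iff]
      rw [List.forall₂_map_right_iff] at ih
      exact forall2_add_le ih hcle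

lemma nextAlphPos_eq (w : List α) (a b : ℕ) (hab : a < b) (hb : b ≤ w.length)
    (hx : w.getD (b - 1) default ∉ (w.drop a).take (b - 1 - a)) :
    nextAlphPos w a (((w.drop a).take (b - a)).toFinset.card) = some b := by
  set d := w.drop a with hd
  set m := b - a with hm
  have hm1 : 1 ≤ m := by omega
  have hdl : m ≤ d.length := by rw [hd, List.length_drop]; omega
  have hmlt : m - 1 < d.length := by omega
  have hxd : d[m - 1] = w.getD (b - 1) default := by
    have h2 : b - 1 - a < (w.drop a).length := by rw [List.length_drop]; omega
    rw [← getD_drop' w a (b - 1) (by omega), List.getD_eq_getElem _ _ h2]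
    congr 1
    omega
  have hsplit : d.take m = (d.take (m - 1)).concat (d[m - 1]'hmlt) := by
    conv_lhs => rw [show m = (m - 1) + 1 by omega]
    exact (List.take_concat_get hmlt).symm
  have hxnot : d[m - 1] ∉ (d.take (m - 1)).toFinset := by
    rw [List.mem_toFinset, hxd]
    have hmm : m - 1 = b - 1 - a := by omega
    rw [hmm]
    exact hx
  have hcard : (d.take m).toFinset.card = (d.take (m - 1)).toFinset.card + 1 := by
    rw [hsplit, List.concat_eq_append, List.toFinset_append]
    simp only [List.toFinset_cons, List.toFinset_nil, LawfulSingleton.insert_empty_eq]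
    rw [Finset.union_comm, ← Finset.insert_eq]
    exact Finset.card_insert_of_notMem hxnot
  set s := (d.take m).toFinset.card with hs
  have hsub : (d.take m).toFinset ⊆ d.toFinset := fun y hy => by
    rw [List.mem_toFinset] at hy ⊢
    exact (List.take_sublist m d).subset hy
  have hnotlt : ¬ d.toFinset.card < s := not_lt.2 (Finset.card_le_card hsub)
  have hbmem : b ∈ {j | (d.take (j - a)).toFinset.card = s} := by
    simp only [Set.mem_setOf_eq, ← hm]; rfl
  have hlb : ∀ j ∈ {j | (d.take (j - a)).toFinset.card = s}, b ≤ j := by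
    intro j hj
    by_contra hjb
    push_neg at hjb
    have hja : j - a ≤ m - 1 := by omega
    have hpre : d.take (j - a) <+ d.take (m - 1) :=
      (List.take_prefix_take_left hja).sublist
    have hsub2 : (d.take (j - a)).toFinset ⊆ (d.take (m - 1)).toFinset := fun y hy => by
      rw [List.mem_toFinset] at hy ⊢
      exact hpre.subset hy
    have hle : (d.take (j - a)).toFinset.card ≤ (d.take (m - 1)).toFinset.card :=
      Finset.card_le_card hsub2
    simp only [Set.mem_setOf_eq] at hj
    omega
  have hinf : sInf {j | (d.take (j - a)).toFinset.card = s} = b :=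
    le_antisymm (Nat.sInf_le hbmem) (hlb _ (Nat.sInf_mem ⟨b, hbmem⟩))
  rw [nextAlphPos, ← hd, if_neg hnotlt, hinf]

end Aux

theorem stmt13 {α : Type u} [DecidableEq α] [Inhabited α]
    (w : List α) (k : ℕ) (hk1 : 1 ≤ k) (hk2 : k ≤ w.length)
    (u : List α) (hu : u ∈ ScatFact k w) :
    ∃ j : Fin k → ℕ, StrictMono j ∧ (∀ i, 1 ≤ j i ∧ j i ≤ w.length) ∧
      (List.ofFn fun i => letterAt w (j i)) = u ∧
      letterAt w (j ⟨0, hk1⟩) ∉ w.take (j ⟨0, hk1⟩ - 1) ∧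
      (∀ i : Fin k, ∀ h : i.val + 1 < k,
        nextAlphPos w (j i)
            (((w.drop (j i)).take (j ⟨i.val + 1, h⟩ - j i)).toFinset.card) =
          some (j ⟨i.val + 1, h⟩)) ∧
      (∀ j' : Fin k → ℕ, StrictMono j' → (∀ i, 1 ≤ j' i ∧ j' i ≤ w.length) →
        (List.ofFn fun i => letterAt w (j' i)) = u → ∀ i, j i ≤ j' i) := by
  obtain ⟨hlen, hsub⟩ := hu
  obtain ⟨hbd, hpw, hmap, hch⟩ := lmEmb_spec u w hsub
  set e := lmEmb u w with he
  have hel : e.length = k := by rw [he, lmEmb_length, hlen]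
  have hklt : ∀ i : Fin k, (i : ℕ) < e.length := fun i => by rw [hel]; exact i.isLt
  refine ⟨fun i => e[(i : ℕ)]'(hklt i) + 1, ?_, ?_, ?_, ?_, ?_, ?_⟩
  · -- StrictMono
    intro i i' hii
    have := List.pairwise_iff_getElem.1 hpw i i' (hklt i) (hklt i') hii
    dsimp only
    omega
  · -- bounds
    intro i
    have := hbd _ (List.getElem_mem (hklt i))
    dsimp only
    omega
  · -- letters
    apply List.ext_getElem
    · rw [List.length_ofFn, hlen]
    · intro n h1 h2
      rw [List.getElem_ofFn]
      have hn : n < e.length := by rw [hel]; rw [List.length_ofFn] at h1; exact h1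
      have : u[n] = (e.map (fun i => w.getD i default))[n]'(by
          rw [List.length_map]; exact hn) := by
        simp_rw [hmap]
      rw [this, List.getElem_map]
      simp only [letterAt, Nat.add_sub_cancel]
  · -- first letter not in prefix
    cases u with
    | nil => simp at hlen; omega
    | cons a u' =>
      have he0 : e[(0 : ℕ)]'(hklt ⟨0, hk1⟩) = w.idxOf a := rfl
      dsimp only
      simp only [letterAt, Nat.add_sub_cancel, he0]
      have hia : w.idxOf a < w.length := List.idxOf_lt_length_iff.2
        (hsub.subset (List.mem_cons_self))
      rw [List.getD_eq_getElem _ _ hia, List.getElem_idxOf hia]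
      exact not_mem_take_indexOf w a
  · -- nextAlphPos
    intro i h
    have hch' := List.isChain_iff_getElem.1 hch i (by rw [hel]; omega)
    have hp : e[(i : ℕ)]'(hklt i) = e[(i : ℕ)]'(by rw [hel]; omega) := rfl
    set p := e[(i : ℕ)]'(hklt i) with hpdef
    set q := e[(i : ℕ) + 1]'(hklt ⟨i + 1, h⟩) with hqdef
    have hpq : p < q := by
      have := List.pairwise_iff_getElem.1 hpw i (i + 1) (hklt i) (hklt ⟨i + 1, h⟩)
        (by omega)
      exact this
    have hq : q < w.length := hbd _ (List.getElem_mem (hklt ⟨i + 1, h⟩))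
    have := nextAlphPos_eq w (p + 1) (q + 1) (by omega) (by omega)
      (by simpa using hch')
    simpa using this
  · -- minimality
    intro j' hsm hbd' hmap' i
    set g := List.ofFn (fun i : Fin k => j' i - 1) with hg
    have hglen : g.length = u.length := by rw [hg, List.length_ofFn, hlen]
    have hgpw : g.Pairwise (· < ·) := by
      rw [hg, List.pairwise_iff_getElem]
      intro a b ha hb hab
      simp only [List.length_ofFn] at ha hb
      rw [List.getElem_ofFn, List.getElem_ofFn]
      have h1 := (hbd' ⟨a, ha⟩).1
      have h2 := hsm (show (⟨a, ha⟩ : Fin k) < ⟨b, hb⟩ from hab)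
      omega
    have hgbd : ∀ x ∈ g, x < w.length := by
      intro x hx
      rw [hg, List.mem_ofFn] at hx
      obtain ⟨m, rfl⟩ := hx
      have h1 := (hbd' m).1
      have h2 := (hbd' m).2
      omega
    have hgmap : g.map (fun i => w.getD i default) = u := by
      rw [hg, List.map_ofFn, ← hmap']
      exact congrArg _ (funext fun m => rfl)
    have hf2 := lmEmb_min u w g hglen hgpw hgbd hgmap
    obtain ⟨hlen2, hget⟩ := List.forall₂_iff_get.1 hf2
    have hgi : (i : ℕ) < g.length := by rw [hglen, hlen]; exact i.isLt
    have hgget : g[(i : ℕ)]'hgi = j' i - 1 := by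
      simp only [hg, List.getElem_ofFn, Fin.eta]
    have hthis := hget i (by rw [hlen2]; exact hgi) hgi
    simp only [List.get_eq_getElem] at hthis
    rw [hgget] at hthis
    have h1 := (hbd' i).1
    have h4 : e[(i : ℕ)]'(hklt i) = (lmEmb u w)[(i : ℕ)]'(by rw [hlen2]; exact hgi) := rfl
    dsimp only
    omega
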